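/- Let G be a finite d-regular graph with normalized adjacency (random walk) matrix A, let f : E(G) → {±1} be a signing, and let A^f be the signed matrix with A^f(u,v) = f({u,v})/d for edges and 0 otherwise. Then the multiset of eigenvalues of the random walk matrix of the f-induced 2-lift Ĝ equals the disjoint union (with multiplicities) of the eigenvalues of A and the eigenvalues of A^f. -/

import Mathlib

noncomputable section
namespace S1

/-- sign of a Bool as an integer (`true ↦ 1`, `false ↦ -1`). -/
def sgn (b : Bool) : ℤ := if b then 1 else -1

/-- normalized adjacency (random walk) matrix of a `d`-regular graph -/
def rwMatrix {V : Type*} [Fintype V] [DecidableEq V] (G : SimpleGraph V)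
    [DecidableRel G.Adj] (d : ℕ) : Matrix V V ℝ :=
  (d : ℝ)⁻¹ • G.adjMatrix ℝ

/-- the `f`-signed random walk matrix: `f({u,v})/d` on edges, `0` otherwise -/
def signedRW {V : Type*} [Fintype V] [DecidableEq V] (G : SimpleGraph V)
    [DecidableRel G.Adj] (d : ℕ) (f : V → V → ℤ) : Matrix V V ℝ :=
  fun u v => if G.Adj u v then (f u v : ℝ) / (d : ℝ) else 0

/-- random walk matrix of the `f`-induced 2-lift of `G` (on `V × {±1}`,
`(v,i) ~ (u,j)` iff `{v,u} ∈ E(G)` and `i·j = f({u,v})`). -/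
def liftRW {V : Type*} [Fintype V] [DecidableEq V] (G : SimpleGraph V)
    [DecidableRel G.Adj] (d : ℕ) (f : V → V → ℤ) :
    Matrix (V × Bool) (V × Bool) ℝ :=
  fun a b => if G.Adj a.1 b.1 ∧ sgn a.2 * sgn b.2 = f a.1 b.1 then (d : ℝ)⁻¹ else 0

/-- charpoly is invariant under similarity (stated via an intertwining relation). -/
lemma charpoly_of_conj {n : Type*} [Fintype n] [DecidableEq n]
    (P M D : Matrix n n ℝ) (hP : P.det ≠ 0) (h : P * M = D * P) :
    M.charpoly = D.charpoly := by
  have key : P.map Polynomial.C * M.charmatrix = D.charmatrix * P.map Polynomial.C := by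
    unfold Matrix.charmatrix
    rw [Matrix.mul_sub, Matrix.sub_mul]
    congr 1
    · exact (Matrix.scalar_commute _ (fun r => Commute.all _ r) _).symm
    · show P.map Polynomial.C * M.map Polynomial.C = D.map Polynomial.C * P.map Polynomial.C
      rw [← Matrix.map_mul, ← Matrix.map_mul, h]
  have hdet := congrArg Matrix.det key
  rw [Matrix.det_mul, Matrix.det_mul] at hdet
  have hPC : (P.map Polynomial.C).det = Polynomial.C P.det :=
    (RingHom.map_det Polynomial.C P).symm
  rw [hPC] at hdet
  unfold Matrix.charpoly
  exact mul_left_cancel₀ (a := Polynomial.C P.det) (by simpa using hP)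
    (hdet.trans (mul_comm _ _))

/-- the eigenvalue multiset of the random walk matrix of the `f`-induced
2-lift is the union, with multiplicities, of the eigenvalues of `A` and of `A^f`;
equivalently the characteristic polynomials multiply. -/
theorem lift_charpoly_eq_mul {V : Type*} [Fintype V] [DecidableEq V] (G : SimpleGraph V)
    [DecidableRel G.Adj] (d : ℕ) (hd : 0 < d) (hreg : G.IsRegularOfDegree d)
    (f : V → V → ℤ) (hsymm : ∀ u v, f u v = f v u)
    (hsign : ∀ u v, G.Adj u v → f u v = 1 ∨ f u v = -1) :
    (liftRW G d f).charpoly = (rwMatrix G d).charpoly * (signedRW G d f).charpoly := by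
  classical
  -- the two "half" matrices
  set E : Matrix V V ℝ := fun u v => if G.Adj u v ∧ f u v = 1 then (d : ℝ)⁻¹ else 0 with hE
  set F : Matrix V V ℝ := fun u v => if G.Adj u v ∧ f u v = -1 then (d : ℝ)⁻¹ else 0 with hF
  have hEF : E + F = rwMatrix G d := by
    funext u v
    change E u v + F u v = _
    simp only [Matrix.add_apply, hE, hF, rwMatrix, Matrix.smul_apply,
      SimpleGraph.adjMatrix_apply, smul_eq_mul]
    by_cases h : G.Adj u v
    · rcases hsign u v h with h1 | h1 <;> simp [h, h1]
    · simp [h]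
  have hEF' : E - F = signedRW G d f := by
    funext u v
    change E u v - F u v = _
    simp only [Matrix.sub_apply, hE, hF, signedRW]
    by_cases h : G.Adj u v
    · rcases hsign u v h with h1 | h1 <;> simp [h, h1, div_eq_mul_inv]
    · simp [h]
  -- reindex the lift to a 2×2 block matrix
  let e : V × Bool ≃ V ⊕ V := (Equiv.prodComm V Bool).trans (Equiv.boolProdEquivSum V)
  have hre : Matrix.reindex e e (liftRW G d f) = Matrix.fromBlocks E F F E := by
    ext i j
    rcases i with u | u <;> rcases j with v | v <;>
      · simp only [Matrix.reindex_apply, Matrix.submatrix_apply, liftRW, e,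
          Equiv.symm_trans_apply, Equiv.boolProdEquivSum, Equiv.coe_fn_symm_mk,
          Sum.elim_inl, Sum.elim_inr, Equiv.prodComm_symm, Equiv.prodComm_apply,
          Prod.swap_prod_mk, sgn, Matrix.fromBlocks_apply₁₁, Matrix.fromBlocks_apply₁₂,
          Matrix.fromBlocks_apply₂₁, Matrix.fromBlocks_apply₂₂, hE, hF]
        norm_num
        congr 1
        simp [eq_comm]
  -- similarity to block-diagonal form
  let P : Matrix (V ⊕ V) (V ⊕ V) ℝ := Matrix.fromBlocks 1 1 1 (-1)
  have hPdet : P * P = (2 : ℝ) • 1 := by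
    rw [show ((2 : ℝ) • (1 : Matrix (V ⊕ V) (V ⊕ V) ℝ)) =
        Matrix.fromBlocks ((2 : ℝ) • 1) 0 0 ((2 : ℝ) • 1) from by
      rw [← Matrix.fromBlocks_one, Matrix.fromBlocks_smul]; simp]
    simp [P, Matrix.fromBlocks_multiply, two_smul]
  have hPunit : P.det ≠ 0 := by
    intro h0
    have : (P * P).det = 0 := by rw [Matrix.det_mul, h0, mul_zero]
    rw [hPdet] at this
    simp [Matrix.det_smul] at this
  have hconj : P * Matrix.fromBlocks E F F E =
      Matrix.fromBlocks (E + F) 0 0 (E - F) * P := by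
    rw [show (Matrix.fromBlocks (E + F) 0 0 (E - F)) * P =
        Matrix.fromBlocks (E + F) (E + F) (E - F) (-(E - F)) from by
      simp [P, Matrix.fromBlocks_multiply],
      show P * Matrix.fromBlocks E F F E =
        Matrix.fromBlocks (E + F) (F + E) (E - F) (F - E) from by
      simp [P, Matrix.fromBlocks_multiply, sub_eq_add_neg]]
    rw [add_comm F E, ← neg_sub E F]
  have h1 : (liftRW G d f).charpoly = (Matrix.fromBlocks E F F E).charpoly := by
    rw [← hre, Matrix.charpoly_reindex]
  rw [h1, charpoly_of_conj P _ _ hPunit hconj,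
    Matrix.charpoly_fromBlocks_zero₂₁, hEF, hEF']

end S1
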